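/- Let α be a type equipped with an additive action of ℝ (written t +ᵥ L, satisfying 0 +ᵥ L = L and (s + t) +ᵥ L = s +ᵥ (t +ᵥ L)). Let T : ℝ → α → M₂(ℂ) be such that for every L ∈ α the map t ↦ T(t, L) is differentiable, T(0, L) = I for all L, and T satisfies the cocycle property T(t₁ + t₂, L) = T(t₁, t₂ +ᵥ L) · T(t₂, L) for all t₁, t₂ ∈ ℝ and L ∈ α. Then, defining B : α → M₂(ℂ) by B(L) := (d/ds T(s, L))|ₛ₌₀, one has for all t ∈ ℝ and L ∈ α: (d/ds T(s, L))|ₛ₌ₜ = B(t +ᵥ L) · T(t, L). -/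

import Mathlib

/-- Forward direction of Proposition 2.2: a smooth cocycle `T` over an additive
`ℝ`-action satisfies the autonomous ODE `(d/ds T(s,L))|_{s=t} = B(t +ᵥ L) * T(t,L)`,
where `B(L)` is the entrywise derivative of `s ↦ T(s,L)` at `s = 0`. -/
theorem stmt1 {α : Type*} [AddAction ℝ α]
    (T : ℝ → α → Matrix (Fin 2) (Fin 2) ℂ)
    (hdiff : ∀ (L : α) (i j : Fin 2), Differentiable ℝ (fun t : ℝ => T t L i j))
    (hid : ∀ L : α, T 0 L = 1)
    (hcocycle : ∀ (t₁ t₂ : ℝ) (L : α), T (t₁ + t₂) L = T t₁ (t₂ +ᵥ L) * T t₂ L)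
    (B : α → Matrix (Fin 2) (Fin 2) ℂ)
    (hB : ∀ (L : α) (i j : Fin 2), B L i j = deriv (fun s : ℝ => T s L i j) 0) :
    ∀ (t : ℝ) (L : α) (i j : Fin 2),
      deriv (fun s : ℝ => T s L i j) t = (B (t +ᵥ L) * T t L) i j := by
  intro t L i j
  have hfun : (fun s : ℝ => T s L i j)
      = fun s : ℝ => ∑ k : Fin 2, T (s - t) (t +ᵥ L) i k * T t L k j := by
    funext s
    have : T s L = T (s - t) (t +ᵥ L) * T t L := by
      have := hcocycle (s - t) t L
      simpa using this
    simp [this, Matrix.mul_apply]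
  rw [hfun]
  have hd : ∀ k : Fin 2, HasDerivAt (fun s : ℝ => T (s - t) (t +ᵥ L) i k)
      (deriv (fun s : ℝ => T s (t +ᵥ L) i k) 0) t := by
    intro k
    have h1 : HasDerivAt (fun s : ℝ => T s (t +ᵥ L) i k)
        (deriv (fun s : ℝ => T s (t +ᵥ L) i k) 0) 0 :=
      (hdiff (t +ᵥ L) i k 0).hasDerivAt
    have h2 : HasDerivAt (fun s : ℝ => s - t) 1 t := by
      simpa using (hasDerivAt_id t).sub_const t
    have hc : HasDerivAt ((fun s : ℝ => T s (t +ᵥ L) i k) ∘ (fun s : ℝ => s - t))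
        ((1 : ℝ) • deriv (fun s : ℝ => T s (t +ᵥ L) i k) 0) t :=
      h1.scomp_of_eq t h2 (by ring)
    simpa [Function.comp_def] using hc
  have hsum : HasDerivAt (fun s : ℝ => ∑ k : Fin 2, T (s - t) (t +ᵥ L) i k * T t L k j)
      (∑ k : Fin 2, deriv (fun s : ℝ => T s (t +ᵥ L) i k) 0 * T t L k j) t :=
    HasDerivAt.fun_sum fun k _ => (hd k).mul_const _
  rw [hsum.deriv, Matrix.mul_apply]
  exact Finset.sum_congr rfl fun k _ => by rw [hB]
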